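/- If a group G contains a subgroup isomorphic to the free group F_2 on two generators, then G can be written as a union G = A ∪ B of two subsets each of which has infinite pack_2-index: there exist infinite sets D_A, D_B ⊆ G such that the translates {dA : d ∈ D_A} are pairwise disjoint and the translates {dB : d ∈ D_B} are pairwise disjoint. -/

import Mathlib

open FreeGroup

private lemma myreduce_cons {α : Type*} [DecidableEq α] (x : α × Bool) (L : List (α × Bool))
    (hL : FreeGroup.reduce L = L) (h : L.head? ≠ some (x.1, !x.2)) :
    FreeGroup.reduce (x :: L) = x :: L := by
  rw [FreeGroup.reduce.cons, hL]
  cases L with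
  | nil => rfl
  | cons y t =>
    simp only
    rw [if_neg]
    rintro ⟨h1, h2⟩
    apply h
    simp only [List.head?_cons, Option.some.injEq]
    obtain ⟨y1, y2⟩ := y
    simp only at h1 h2
    simp [← h1, h2]

private lemma mymul_toWord {α : Type*} [DecidableEq α] (x : α × Bool) (w : FreeGroup α)
    (h : w.toWord.head? ≠ some (x.1, !x.2)) :
    (FreeGroup.mk [x] * w).toWord = x :: w.toWord := by
  conv_lhs => rw [← FreeGroup.mk_toWord (x := w)]
  rw [FreeGroup.mul_mk, FreeGroup.toWord_mk]
  exact myreduce_cons x w.toWord (FreeGroup.reduce_toWord w) h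

private lemma mypow_toWord {α : Type*} [DecidableEq α] (x : α × Bool) (n : ℕ) (w : FreeGroup α)
    (h : w.toWord.head?.map Prod.fst ≠ some x.1) :
    ((FreeGroup.mk [x]) ^ n * w).toWord = List.replicate n x ++ w.toWord := by
  induction n with
  | zero => simp
  | succ n ih =>
    rw [pow_succ', mul_assoc, mymul_toWord, ih, List.replicate_succ, List.cons_append]
    rw [ih]
    cases n with
    | zero =>
      simp only [List.replicate, List.nil_append]
      intro hc
      exact h (by rw [hc]; rfl)
    | succ n =>
      rw [List.replicate_succ]
      simp only [List.cons_append, List.head?_cons, Option.some.injEq]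
      rintro hc
      simpa using congrArg Prod.snd (Option.some.inj hc)

private lemma myhead_pow_mul {α : Type*} [DecidableEq α] (i : α) (k : ℕ) (hk : 0 < k)
    (w : FreeGroup α) (h : w.toWord.head?.map Prod.fst ≠ some i) :
    ((FreeGroup.of i) ^ k * w).toWord.head?.map Prod.fst = some i := by
  have : (FreeGroup.of i) = FreeGroup.mk [(i, true)] := rfl
  rw [this, mypow_toWord _ _ _ h]
  cases k with
  | zero => omega
  | succ k => rw [List.replicate_succ]; rfl

theorem union_of_two_sets_with_infinite_pack_index {G : Type*} [Group G]
    (h : ∃ φ : FreeGroup (Fin 2) →* G, Function.Injective φ) :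
    ∃ A B : Set G, A ∪ B = Set.univ ∧
      ∃ DA DB : Set G, DA.Infinite ∧ DB.Infinite ∧
        DA.Pairwise (fun d d' => Disjoint ((fun a => d * a) '' A) ((fun a => d' * a) '' A)) ∧
        DB.Pairwise (fun d d' => Disjoint ((fun a => d * a) '' B) ((fun a => d' * a) '' B)) := by
  classical
  obtain ⟨φ, hφ⟩ := h
  set H : Subgroup G := φ.range with hH
  let s : Setoid G :=
    ⟨fun g g' => g * g'⁻¹ ∈ H,
      ⟨fun g => by simpa using H.one_mem, fun {g g'} hg => by simpa [mul_inv_rev] using H.inv_mem hg,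
        fun {a b c} h1 h2 => by
          have := H.mul_mem h1 h2
          rwa [show a * b⁻¹ * (b * c⁻¹) = a * c⁻¹ by group] at this⟩⟩
  let rep : G → G := fun g => (Quotient.mk s g).out
  have rep_rel : ∀ g, rep g * g⁻¹ ∈ H := fun g => by
    have := Quotient.exact (Quotient.out_eq (Quotient.mk s g))
    exact this
  have rep_eq : ∀ g g', g * g'⁻¹ ∈ H → rep g = rep g' := fun g g' hgg' =>
    congrArg Quotient.out (Quotient.sound hgg')
  have hg_mem : ∀ g, g * (rep g)⁻¹ ∈ H := fun g => by
    simpa [mul_inv_rev] using H.inv_mem (rep_rel g)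
  let wf : G → FreeGroup (Fin 2) := fun g => (MonoidHom.mem_range.mp (hg_mem g)).choose
  have hw : ∀ g, φ (wf g) = g * (rep g)⁻¹ := fun g =>
    (MonoidHom.mem_range.mp (hg_mem g)).choose_spec
  let hd : FreeGroup (Fin 2) → Option (Fin 2) := fun u => u.toWord.head?.map Prod.fst
  have step : ∀ (u : FreeGroup (Fin 2)) (g : G), wf (φ u * g) = u * wf g := by
    intro u g
    apply hφ
    have hrep : rep (φ u * g) = rep g := rep_eq _ _ (by simpa using ⟨u, rfl⟩)
    rw [hw, φ.map_mul, hw, hrep, mul_assoc]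
  have core : ∀ (i : Fin 2) (k : ℕ), 0 < k → ∀ g g' : G, φ (FreeGroup.of i) ^ k * g = g' →
      hd (wf g) ≠ some i → hd (wf g') ≠ some i → False := by
    intro i k hk g g' he h1 h2
    apply h2
    have : wf g' = (FreeGroup.of i) ^ k * wf g := by
      rw [← he, ← map_pow, step]
    rw [show hd (wf g') = (wf g').toWord.head?.map Prod.fst from rfl, this]
    exact myhead_pow_mul i k hk _ h1
  set A : Set G := {g | hd (wf g) = some 0} with hA
  have main : ∀ (i : Fin 2) (S : Set G), (∀ g ∈ S, hd (wf g) ≠ some i) →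
      (Set.range fun n : ℕ => φ (FreeGroup.of i) ^ n).Pairwise
        (fun d d' => Disjoint ((fun a => d * a) '' S) ((fun a => d' * a) '' S)) := by
    intro i S hS
    rintro _ ⟨m, rfl⟩ _ ⟨n, rfl⟩ hne
    rw [Set.disjoint_left]
    rintro x ⟨a1, ha1, rfl⟩ ⟨a2, ha2, heq⟩
    have hmn : m ≠ n := fun hc => hne (by rw [hc])
    have claim : ∀ (p q : ℕ) (b1 b2 : G), p < q → b1 ∈ S → b2 ∈ S →
        φ (FreeGroup.of i) ^ q * b2 = φ (FreeGroup.of i) ^ p * b1 → False := by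
      intro p q b1 b2 hpq hb1 hb2 he
      have hk : φ (FreeGroup.of i) ^ (q - p) * b2 = b1 := by
        apply mul_left_cancel (a := φ (FreeGroup.of i) ^ p)
        rw [← mul_assoc, ← pow_add, Nat.add_sub_cancel' hpq.le]
        exact he
      exact core i (q - p) (Nat.sub_pos_of_lt hpq) b2 b1 hk (hS b2 hb2) (hS b1 hb1)
    rcases (Ne.lt_or_gt hmn) with hlt | hlt
    · exact claim m n a1 a2 hlt ha1 ha2 heq
    · exact claim n m a2 a1 hlt ha2 ha1 heq.symm
  have pow_toWord : ∀ (i : Fin 2) (n : ℕ),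
      ((FreeGroup.of i) ^ n : FreeGroup (Fin 2)).toWord = List.replicate n (i, true) := by
    intro i n
    have h1 : ((1 : FreeGroup (Fin 2)).toWord.head?.map Prod.fst) ≠ some i := by
      simp [FreeGroup.toWord_one]
    have := mypow_toWord (i, true) n 1 h1
    rw [mul_one] at this
    simp only [FreeGroup.toWord_one, List.append_nil] at this
    exact this
  have inf : ∀ i : Fin 2, (Set.range fun n : ℕ => φ (FreeGroup.of i) ^ n).Infinite := by
    intro i
    apply Set.infinite_range_of_injective
    intro m n hmn
    have : ((FreeGroup.of i) ^ m : FreeGroup (Fin 2)) = (FreeGroup.of i) ^ n := by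
      apply hφ
      simpa [map_pow] using hmn
    have hlen := congrArg (fun u => u.toWord.length) this
    simpa [pow_toWord] using hlen
  refine ⟨A, Aᶜ, Set.union_compl_self A,
    Set.range (fun n : ℕ => φ (FreeGroup.of 1) ^ n),
    Set.range (fun n : ℕ => φ (FreeGroup.of 0) ^ n),
    inf 1, inf 0, main 1 A ?_, main 0 Aᶜ ?_⟩
  · intro g hg hc
    rw [hA] at hg
    rw [hg] at hc
    exact (by decide : (0 : Fin 2) ≠ 1) (Option.some.inj hc)
  · intro g hg hc
    exact hg hc
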